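/- Let A be an alphabet with |A| = n ≥ 2 and fix k ≥ 1. Let S_3^{n,k} be the set of words XY with |X| = |Y| ≥ k+1 and Hamming distance d(X,Y) ≤ k. Then the minimal length of a crucial word with respect to S_3^{n,k} is 2k + 1, witnessed by the word p_1 p_2 ··· p_k x p_1 p_2 ··· p_k with x ≠ p_i for all i. -/
import Mathlib


/-- The prohibition set `S_3^{n,k}`: all words `X ++ Y` with `|X| = |Y| ≥ k+1`
and Hamming distance `d(X,Y) ≤ k`. -/
def Proh (n k : ℕ) : Set (List (Fin n)) :=
  {w | ∃ X Y : List (Fin n), w = X ++ Y ∧ X.length = Y.length ∧ k + 1 ≤ X.length ∧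
        ((X.zip Y).countP fun p => p.1 != p.2) ≤ k}

/-- A word is free from `S_3^{n,k}` if it has no factor in `S_3^{n,k}`. -/
def FreeP (n k : ℕ) (w : List (Fin n)) : Prop :=
  ∀ v ∈ Proh n k, ¬ v <:+: w

/-- A word is crucial w.r.t. `S_3^{n,k}` if it is free from `S_3^{n,k}` but
appending any letter of the alphabet creates a prohibited factor. -/
def CrucialP (n k : ℕ) (w : List (Fin n)) : Prop :=
  FreeP n k w ∧ ∀ a : Fin n, ∃ v ∈ Proh n k, v <:+: (w ++ [a])

lemma proh_length {n k : ℕ} {v : List (Fin n)} (hv : v ∈ Proh n k) :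
    2 * k + 2 ≤ v.length := by
  obtain ⟨X, Y, rfl, hlen, hk1, -⟩ := hv
  rw [List.length_append, ← hlen]; omega

lemma free_of_short {n k : ℕ} {w : List (Fin n)} (h : w.length ≤ 2 * k + 1) :
    FreeP n k w := by
  intro v hv hinf
  have h1 := proh_length hv
  have h2 := hinf.length_le
  omega

lemma zip_self_countP {n : ℕ} (l : List (Fin n)) :
    (l.zip l).countP (fun p => p.1 != p.2) = 0 := by
  induction l with
  | nil => rfl
  | cons a t ih => simp [List.zip_cons_cons, List.countP_cons, ih]

lemma crucial_pxp {n k : ℕ} (hk : 1 ≤ k) (p : Fin k → Fin n) (x : Fin n) :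
    CrucialP n k (List.ofFn p ++ [x] ++ List.ofFn p) := by
  constructor
  · apply free_of_short; simp; omega
  · intro a
    refine ⟨(List.ofFn p ++ [x] ++ List.ofFn p) ++ [a], ?_, List.infix_refl _⟩
    refine ⟨List.ofFn p ++ [x], List.ofFn p ++ [a], by simp, by simp, by simp, ?_⟩
    rw [List.zip_append (by simp)]
    rw [List.countP_append, zip_self_countP]
    simp [List.countP_cons]
    split <;> omega

theorem Lmin_hamming (n k : ℕ) (hn : 2 ≤ n) (hk : 1 ≤ k) :
    ((∃ w : List (Fin n), CrucialP n k w ∧ w.length = 2 * k + 1) ∧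
     (∀ w : List (Fin n), CrucialP n k w → 2 * k + 1 ≤ w.length)) ∧
    (∀ (p : Fin k → Fin n) (x : Fin n), (∀ i : Fin k, x ≠ p i) →
      CrucialP n k (List.ofFn p ++ [x] ++ List.ofFn p) ∧
        (List.ofFn p ++ [x] ++ List.ofFn p).length = 2 * k + 1) := by
  refine ⟨⟨⟨List.ofFn (fun _ : Fin k => (⟨0, by omega⟩ : Fin n)) ++ [(⟨1, by omega⟩ : Fin n)] ++
      List.ofFn (fun _ : Fin k => (⟨0, by omega⟩ : Fin n)), crucial_pxp hk _ _, by simp; omega⟩, ?_⟩, ?_⟩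
  · intro w hw
    obtain ⟨-, hcru⟩ := hw
    obtain ⟨v, hv, hinf⟩ := hcru ⟨0, by omega⟩
    have h1 := proh_length hv
    have h2 := hinf.length_le
    simp at h2
    omega
  · intro p x _
    exact ⟨crucial_pxp hk p x, by simp; omega⟩
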